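/- arXiv:2602.12861 — 4 statements merged into one kernel-verified Lean document; each statement's English description precedes it below -/
import Mathlib

section
/- If L is a Lawson compact algebraic L-domain, then the lattice CO(L) of compact-open subsets of L (with the Scott topology, ordered by inclusion) is an FDD-lattice: every compact-open set is a finite union of nonempty co-prime compact-open sets, and the intersection of any two nonempty co-prime compact-open sets is a finite union of pairwise disjoint nonempty co-prime compact-open sets. -/
section Domains

variable (P : Type*) [PartialOrder P]

/-- A dcpo: every nonempty directed subset has a least upper bound. -/
def DirectedComplete : Prop :=
  ∀ D : Set P, D.Nonempty → DirectedOn (· ≤ ·) D → ∃ s, IsLUB D s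

variable {P}

/-- A compact (finite) element of a poset. -/
def IsCompactElt (k : P) : Prop :=
  ∀ D : Set P, D.Nonempty → DirectedOn (· ≤ ·) D → ∀ s : P, IsLUB D s → k ≤ s →
    ∃ d ∈ D, k ≤ d

/-- A Scott-open subset: an upper set inaccessible by directed suprema. -/
def ScottOpen (U : Set P) : Prop :=
  IsUpperSet U ∧ ∀ D : Set P, D.Nonempty → DirectedOn (· ≤ ·) D → ∀ s : P, IsLUB D s →
    s ∈ U → (D ∩ U).Nonempty

/-- Compactness of a set with respect to covers by Scott-open sets. -/
def ScottCompactSet (K : Set P) : Prop :=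
  ∀ C : Set (Set P), (∀ V ∈ C, ScottOpen V) → K ⊆ ⋃₀ C →
    ∃ F : Finset (Set P), ↑F ⊆ C ∧ K ⊆ ⋃₀ (F : Set (Set P))

variable (P)

/-- The collection of compact-open subsets (w.r.t. the Scott topology). -/
def CO : Set (Set P) := {U | ScottOpen U ∧ ScottCompactSet U}

/-- An algebraic domain: a dcpo in which, for every `x`, the set of compact elements
below `x` is a (nonempty) directed set with least upper bound `x`. -/
def IsAlgebraicDomain : Prop :=
  DirectedComplete P ∧
  ∀ x : P,
    (Set.Iic x ∩ {k | IsCompactElt k}).Nonempty ∧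
    DirectedOn (· ≤ ·) (Set.Iic x ∩ {k | IsCompactElt k}) ∧
    IsLUB (Set.Iic x ∩ {k | IsCompactElt k}) x

/-- Every principal ideal `↓x` is a complete lattice in the induced order
(equivalently: every subset of `↓x` has a least upper bound inside `↓x`). -/
def PrincipalIdealsComplete : Prop :=
  ∀ x : P, ∀ S : Set P, S ⊆ Set.Iic x →
    ∃ s, s ≤ x ∧ (∀ a ∈ S, a ≤ s) ∧ ∀ u, u ≤ x → (∀ a ∈ S, a ≤ u) → s ≤ u

/-- An algebraic L-domain. -/
def IsAlgebraicLDomain : Prop := IsAlgebraicDomain P ∧ PrincipalIdealsComplete P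

/-- The Lawson topology: generated by the Scott-open sets together with complements
of principal filters. -/
def lawsonTopology : TopologicalSpace P :=
  TopologicalSpace.generateFrom ({U | ScottOpen U} ∪ {U | ∃ x : P, U = (Set.Ici x)ᶜ})

/-- Lawson compactness: compactness in the Lawson topology. -/
def LawsonCompact : Prop := @CompactSpace P (lawsonTopology P)

end Domains

section FDD

variable {L : Type*} [Lattice L] [BoundedOrder L]

/-- A nonzero co-prime element. -/
def CoprimeElt (a : L) : Prop :=
  a ≠ ⊥ ∧ ∀ x y : L, a ≤ x ⊔ y → a ≤ x ∨ a ≤ y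

/-- A finitely disjunctive distributive lattice (FDD-lattice): a bounded distributive
lattice in which (1) every element is a finite join of nonzero co-primes, and
(2) the meet of two nonzero co-primes is a finite join of pairwise disjoint
nonzero co-primes. -/
def IsFDD (L : Type*) [DistribLattice L] [BoundedOrder L] : Prop :=
  (∀ x : L, ∃ F : Finset L, (∀ a ∈ F, CoprimeElt a) ∧ x = F.sup id) ∧
  (∀ a b : L, CoprimeElt a → CoprimeElt b →
    ∃ F : Finset L, (∀ c ∈ F, CoprimeElt c) ∧
      (∀ c ∈ F, ∀ d ∈ F, c ≠ d → c ⊓ d = ⊥) ∧ a ⊓ b = F.sup id)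

/-- A point of a bounded lattice: a lattice homomorphism into the two-element
bounded lattice `Bool` preserving `0`, `1`, binary meets and binary joins. -/
def IsPoint (p : L → Bool) : Prop :=
  p ⊥ = false ∧ p ⊤ = true ∧
  (∀ x y : L, p (x ⊓ y) = (p x && p y)) ∧
  (∀ x y : L, p (x ⊔ y) = (p x || p y))

end FDD

/-- The poset of points of a bounded lattice, with the pointwise order. -/
def Pt (L : Type*) [Lattice L] [BoundedOrder L] : Type _ :=
  {p : L → Bool // IsPoint p}

noncomputable instance (L : Type*) [Lattice L] [BoundedOrder L] : PartialOrder (Pt L) :=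
  inferInstanceAs (PartialOrder {p : L → Bool // IsPoint p})

/-- `γ_a : L → {0,1}`, `γ_a x = 1` iff `a ≤ x`. -/
noncomputable def gammaPt {L : Type*} [Lattice L] [BoundedOrder L] (a : L) : L → Bool :=
  fun x => @decide (a ≤ x) (Classical.propDecidable _)

/-- A bounded lattice homomorphism. -/
def IsBLH {L M : Type*} [Lattice L] [BoundedOrder L] [Lattice M] [BoundedOrder M]
    (f : L → M) : Prop :=
  f ⊥ = ⊥ ∧ f ⊤ = ⊤ ∧ (∀ x y, f (x ⊓ y) = f x ⊓ f y) ∧ (∀ x y, f (x ⊔ y) = f x ⊔ f y)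

/-- A nonempty co-prime element of the lattice `CO P`. -/
def CoprimeCO (P : Type*) [PartialOrder P] (U : Set P) : Prop :=
  U ∈ CO P ∧ U ≠ ∅ ∧ ∀ V ∈ CO P, ∀ W ∈ CO P, U ⊆ V ∪ W → U ⊆ V ∨ U ⊆ W

section Helpers

variable {P : Type*} [PartialOrder P]

lemma scottOpen_Ici {k : P} (hk : IsCompactElt k) : ScottOpen (Set.Ici k) := by
  refine ⟨fun x y hxy hx => le_trans hx hxy, ?_⟩
  intro D hne hdir s hs hsk
  obtain ⟨d, hd, hkd⟩ := hk D hne hdir s hs hsk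
  exact ⟨d, hd, hkd⟩

lemma scottCompactSet_Ici (k : P) : ScottCompactSet (Set.Ici k) := by
  intro C hC hsub
  obtain ⟨V, hV, hkV⟩ := hsub (Set.mem_Ici.mpr le_rfl)
  exact ⟨{V}, by simpa using hV, fun x hx => ⟨V, by simp, (hC V hV).1 hx hkV⟩⟩

lemma Ici_mem_CO {k : P} (hk : IsCompactElt k) : Set.Ici k ∈ CO P :=
  ⟨scottOpen_Ici hk, scottCompactSet_Ici k⟩

lemma coprimeCO_Ici {k : P} (hk : IsCompactElt k) : CoprimeCO P (Set.Ici k) := by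
  refine ⟨Ici_mem_CO hk, (Set.nonempty_Ici).ne_empty, ?_⟩
  intro V hV W hW hsub
  rcases hsub (Set.mem_Ici.mpr le_rfl) with h | h
  · exact Or.inl fun x hx => hV.1.1 hx h
  · exact Or.inr fun x hx => hW.1.1 hx h

lemma scottOpen_empty : ScottOpen (∅ : Set P) :=
  ⟨fun _ _ _ h => h.elim, fun _ _ _ _ _ h => h.elim⟩

lemma CO_empty : (∅ : Set P) ∈ CO P :=
  ⟨scottOpen_empty, fun _ _ _ => ⟨∅, by simp⟩⟩

lemma scottOpen_union {U V : Set P} (hU : ScottOpen U) (hV : ScottOpen V) :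
    ScottOpen (U ∪ V) := by
  refine ⟨hU.1.union hV.1, ?_⟩
  intro D hne hdir s hs hsUV
  rcases hsUV with h | h
  · obtain ⟨d, hd, hdU⟩ := hU.2 D hne hdir s hs h
    exact ⟨d, hd, Or.inl hdU⟩
  · obtain ⟨d, hd, hdV⟩ := hV.2 D hne hdir s hs h
    exact ⟨d, hd, Or.inr hdV⟩

lemma scottOpen_inter {U V : Set P} (hU : ScottOpen U) (hV : ScottOpen V) :
    ScottOpen (U ∩ V) := by
  refine ⟨hU.1.inter hV.1, ?_⟩
  intro D hne hdir s hs hsUV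
  obtain ⟨d1, hd1, hd1U⟩ := hU.2 D hne hdir s hs hsUV.1
  obtain ⟨d2, hd2, hd2V⟩ := hV.2 D hne hdir s hs hsUV.2
  obtain ⟨d, hd, h1, h2⟩ := hdir d1 hd1 d2 hd2
  exact ⟨d, hd, hU.1 h1 hd1U, hV.1 h2 hd2V⟩

lemma CO_union {U V : Set P} (hU : U ∈ CO P) (hV : V ∈ CO P) : U ∪ V ∈ CO P := by
  classical
  refine ⟨scottOpen_union hU.1 hV.1, ?_⟩
  intro C hC hsub
  obtain ⟨F1, hF1, hF1c⟩ := hU.2 C hC (fun x hx => hsub (Or.inl hx))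
  obtain ⟨F2, hF2, hF2c⟩ := hV.2 C hC (fun x hx => hsub (Or.inr hx))
  refine ⟨F1 ∪ F2, ?_, ?_⟩
  · rw [Finset.coe_union]; exact Set.union_subset hF1 hF2
  · rw [Finset.coe_union, Set.sUnion_union]; exact Set.union_subset_union hF1c hF2c

lemma lawson_isClosed_Ici (k : P) : @IsClosed P (lawsonTopology P) (Set.Ici k) := by
  letI := lawsonTopology P
  rw [← isOpen_compl_iff]
  exact TopologicalSpace.GenerateOpen.basic _ (Or.inr ⟨k, rfl⟩)

lemma scottCompact_of_lawsonClosed (h2 : LawsonCompact P) {K : Set P}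
    (hK : @IsClosed P (lawsonTopology P) K) : ScottCompactSet K := by
  classical
  letI := lawsonTopology P
  haveI : CompactSpace P := h2
  have hKc : IsCompact K := hK.isCompact
  intro C hC hsub
  have hcov : K ⊆ ⋃ V : C, (V : Set P) := by rwa [Set.sUnion_eq_iUnion] at hsub
  obtain ⟨t, ht⟩ := hKc.elim_finite_subcover (fun V : C => (V : Set P))
    (fun V => TopologicalSpace.GenerateOpen.basic _ (Or.inl (hC V V.2))) hcov
  refine ⟨t.image Subtype.val, ?_, ?_⟩
  · intro V hV
    simp only [Finset.mem_coe, Finset.mem_image] at hV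
    obtain ⟨W, -, rfl⟩ := hV
    exact W.2
  · intro x hx
    obtain ⟨V, hVt, hxV⟩ := Set.mem_iUnion₂.mp (ht hx)
    refine ⟨(V : Set P), ?_, hxV⟩
    simp only [Finset.mem_coe, Finset.mem_image]
    exact ⟨V, hVt, rfl⟩

lemma CO_eq_biUnion_Ici (h1 : IsAlgebraicDomain P) {U : Set P} (hU : U ∈ CO P) :
    ∃ M : Set P, M.Finite ∧ (∀ k ∈ M, IsCompactElt k ∧ k ∈ U) ∧
      U = ⋃ k ∈ M, Set.Ici k := by
  classical
  set C : Set (Set P) := Set.Ici '' {k | IsCompactElt k ∧ k ∈ U} with hCdef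
  have hCopen : ∀ V ∈ C, ScottOpen V := by
    rintro V ⟨k, ⟨hk, _⟩, rfl⟩; exact scottOpen_Ici hk
  have hcov : U ⊆ ⋃₀ C := by
    intro x hx
    obtain ⟨hne, hdir, hlub⟩ := h1.2 x
    obtain ⟨k, ⟨hkx, hkc⟩, hkU⟩ := hU.1.2 _ hne hdir x hlub hx
    exact ⟨Set.Ici k, ⟨k, ⟨hkc, hkU⟩, rfl⟩, hkx⟩
  obtain ⟨F, hFC, hFc⟩ := hU.2 C hCopen hcov
  set M : Set P := {k | IsCompactElt k ∧ k ∈ U ∧ Set.Ici k ∈ F} with hMdef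
  have hMfin : M.Finite := by
    have hinj : Set.InjOn Set.Ici M := fun a _ b _ h => Set.Ici_injective h
    apply Set.Finite.of_finite_image ?_ hinj
    apply F.finite_toSet.subset
    rintro V ⟨k, hk, rfl⟩; exact hk.2.2
  refine ⟨M, hMfin, fun k hk => ⟨hk.1, hk.2.1⟩, ?_⟩
  apply Set.Subset.antisymm
  · intro x hx
    obtain ⟨V, hVF, hxV⟩ := hFc hx
    obtain ⟨k, ⟨hkc, hkU⟩, rfl⟩ := hFC hVF
    exact Set.mem_biUnion ⟨hkc, hkU, hVF⟩ hxV
  · intro x hx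
    obtain ⟨k, hk, hxk⟩ := Set.mem_iUnion₂.mp hx
    exact hU.1.1 hxk hk.2.1

lemma CO_lawsonClosed (h1 : IsAlgebraicDomain P) {U : Set P} (hU : U ∈ CO P) :
    @IsClosed P (lawsonTopology P) U := by
  letI := lawsonTopology P
  obtain ⟨M, hMfin, _, rfl⟩ := CO_eq_biUnion_Ici h1 hU
  exact hMfin.isClosed_biUnion (fun k _ => lawson_isClosed_Ici k)

lemma CO_inter (h1 : IsAlgebraicDomain P) (h2 : LawsonCompact P)
    {U V : Set P} (hU : U ∈ CO P) (hV : V ∈ CO P) : U ∩ V ∈ CO P := by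
  letI := lawsonTopology P
  exact ⟨scottOpen_inter hU.1 hV.1,
    scottCompact_of_lawsonClosed h2 ((CO_lawsonClosed h1 hU).inter (CO_lawsonClosed h1 hV))⟩

lemma CO_univ (h2 : LawsonCompact P) : (Set.univ : Set P) ∈ CO P := by
  refine ⟨⟨fun _ _ _ _ => trivial,
    fun D hne _ _ _ _ => ⟨hne.choose, hne.choose_spec, trivial⟩⟩, ?_⟩
  exact scottCompact_of_lawsonClosed h2 (by letI := lawsonTopology P; exact isClosed_univ)

lemma CO_sUnion_finset (F : Finset (Set P)) (hF : ∀ V ∈ F, V ∈ CO P) :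
    ⋃₀ (F : Set (Set P)) ∈ CO P := by
  classical
  induction F using Finset.induction_on with
  | empty => simpa using (CO_empty : (∅ : Set P) ∈ CO P)
  | @insert V F hVF ih =>
    rw [Finset.coe_insert, Set.sUnion_insert]
    exact CO_union (hF V (Finset.mem_insert_self V F))
      (ih fun W hW => hF W (Finset.mem_insert_of_mem hW))

lemma coprime_exists_mem {U : Set P} (hU : CoprimeCO P U) :
    ∀ F : Finset (Set P), (∀ V ∈ F, V ∈ CO P) → U ⊆ ⋃₀ (F : Set (Set P)) →
      ∃ V ∈ F, U ⊆ V := by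
  classical
  intro F
  induction F using Finset.induction_on with
  | empty =>
    intro _ hsub
    simp only [Finset.coe_empty, Set.sUnion_empty, Set.subset_empty_iff] at hsub
    exact absurd hsub hU.2.1
  | @insert V F hVF ih =>
    intro hF hsub
    have hVco := hF V (Finset.mem_insert_self V F)
    have hrest : ∀ W ∈ F, W ∈ CO P := fun W hW => hF W (Finset.mem_insert_of_mem hW)
    have hsub' : U ⊆ V ∪ ⋃₀ (F : Set (Set P)) := by
      rw [Finset.coe_insert, Set.sUnion_insert] at hsub; exact hsub
    rcases hU.2.2 V hVco (⋃₀ (F : Set (Set P))) (CO_sUnion_finset F hrest) hsub' with h | h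
    · exact ⟨V, Finset.mem_insert_self V F, h⟩
    · obtain ⟨W, hW, hUW⟩ := ih hrest h
      exact ⟨W, Finset.mem_insert_of_mem hW, hUW⟩

lemma coprime_eq_Ici (h1 : IsAlgebraicDomain P) {U : Set P} (hU : CoprimeCO P U) :
    ∃ k, IsCompactElt k ∧ U = Set.Ici k := by
  classical
  obtain ⟨M, hMfin, hMk, hUeq⟩ := CO_eq_biUnion_Ici h1 hU.1
  set F : Finset (Set P) := hMfin.toFinset.image Set.Ici with hF
  have hFC : ∀ V ∈ F, V ∈ CO P := by
    intro V hV
    simp only [hF, Finset.mem_image, Set.Finite.mem_toFinset] at hV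
    obtain ⟨k, hk, rfl⟩ := hV
    exact Ici_mem_CO (hMk k hk).1
  have hsub : U ⊆ ⋃₀ (F : Set (Set P)) := by
    rw [hUeq]
    intro x hx
    obtain ⟨k, hk, hxk⟩ := Set.mem_iUnion₂.mp hx
    refine ⟨Set.Ici k, ?_, hxk⟩
    simp only [hF, Finset.coe_image, Set.mem_image, Finset.mem_coe,
      Set.Finite.mem_toFinset]
    exact ⟨k, hk, rfl⟩
  obtain ⟨V, hVF, hUV⟩ := coprime_exists_mem hU F hFC hsub
  simp only [hF, Finset.mem_image, Set.Finite.mem_toFinset] at hVF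
  obtain ⟨k, hk, rfl⟩ := hVF
  refine ⟨k, (hMk k hk).1, Set.Subset.antisymm hUV ?_⟩
  rw [hUeq]; exact Set.subset_biUnion_of_mem hk

/-- A minimal upper bound of `a` and `b`. -/
def IsMubOf (a b m : P) : Prop :=
  a ≤ m ∧ b ≤ m ∧ ∀ y, a ≤ y → b ≤ y → y ≤ m → m ≤ y

lemma mub_below (hPI : PrincipalIdealsComplete P) {a b x : P} (hax : a ≤ x) (hbx : b ≤ x) :
    ∃ m, IsMubOf a b m ∧ m ≤ x := by
  obtain ⟨s, hsx, hub, hleast⟩ := hPI x {a, b} (by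
    intro y hy
    simp only [Set.mem_insert_iff, Set.mem_singleton_iff] at hy
    rcases hy with rfl | rfl <;> assumption)
  refine ⟨s, ⟨hub a (by simp), hub b (by simp), ?_⟩, hsx⟩
  intro y hay hby hys
  refine hleast y (hys.trans hsx) ?_
  intro z hz
  simp only [Set.mem_insert_iff, Set.mem_singleton_iff] at hz
  rcases hz with rfl | rfl <;> assumption

lemma mub_unique (hPI : PrincipalIdealsComplete P) {a b m m' y : P}
    (hm : IsMubOf a b m) (hm' : IsMubOf a b m')
    (hmy : m ≤ y) (hm'y : m' ≤ y) : m = m' := by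
  obtain ⟨s, hsy, hub, hleast⟩ := hPI y {a, b} (by
    intro z hz
    simp only [Set.mem_insert_iff, Set.mem_singleton_iff] at hz
    rcases hz with rfl | rfl
    · exact hm.1.trans hmy
    · exact hm.2.1.trans hmy)
  have hsa : a ≤ s := hub a (by simp)
  have hsb : b ≤ s := hub b (by simp)
  have hmem : ∀ z ∈ ({a, b} : Set P), z ≤ m := by
    intro z hz
    simp only [Set.mem_insert_iff, Set.mem_singleton_iff] at hz
    rcases hz with rfl | rfl
    · exact hm.1
    · exact hm.2.1
  have hmem' : ∀ z ∈ ({a, b} : Set P), z ≤ m' := by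
    intro z hz
    simp only [Set.mem_insert_iff, Set.mem_singleton_iff] at hz
    rcases hz with rfl | rfl
    · exact hm'.1
    · exact hm'.2.1
  have h1 : s ≤ m := hleast m hmy hmem
  have h2 : s ≤ m' := hleast m' hm'y hmem'
  have e1 : m = s := le_antisymm (hm.2.2 s hsa hsb h1) h1
  have e2 : m' = s := le_antisymm (hm'.2.2 s hsa hsb h2) h2
  rw [e1, e2]

lemma mub_compact (h1 : IsAlgebraicLDomain P) {a b m : P}
    (ha : IsCompactElt a) (hb : IsCompactElt b) (hm : IsMubOf a b m) :
    IsCompactElt m := by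
  intro D hne hdir s hs hms
  obtain ⟨d1, hd1, had1⟩ := ha D hne hdir s hs (hm.1.trans hms)
  obtain ⟨d2, hd2, hbd2⟩ := hb D hne hdir s hs (hm.2.1.trans hms)
  obtain ⟨d, hd, h1d, h2d⟩ := hdir d1 hd1 d2 hd2
  obtain ⟨m', hm', hm'd⟩ := mub_below h1.2 (had1.trans h1d) (hbd2.trans h2d)
  have he : m = m' := mub_unique h1.2 hm hm' hms (hm'd.trans (hs.1 hd))
  exact ⟨d, hd, he ▸ hm'd⟩

lemma inter_Ici_decomp (h1 : IsAlgebraicLDomain P) (h2 : LawsonCompact P)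
    {a b : P} (ha : IsCompactElt a) (hb : IsCompactElt b) :
    ∃ F : Finset (Set P), (∀ W ∈ F, CoprimeCO P W) ∧
      (∀ W ∈ F, ∀ W' ∈ F, W ≠ W' → W ∩ W' = ∅) ∧
      Set.Ici a ∩ Set.Ici b = ⋃₀ (F : Set (Set P)) := by
  classical
  set M : Set P := {m | IsMubOf a b m} with hM
  have hdecomp : Set.Ici a ∩ Set.Ici b = ⋃ m ∈ M, Set.Ici m := by
    apply Set.Subset.antisymm
    · rintro x ⟨hax, hbx⟩
      obtain ⟨m, hm, hmx⟩ := mub_below h1.2 hax hbx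
      exact Set.mem_biUnion hm hmx
    · intro x hx
      obtain ⟨m, hm, hmx⟩ := Set.mem_iUnion₂.mp hx
      exact ⟨(hm : IsMubOf a b m).1.trans hmx, hm.2.1.trans hmx⟩
  have hMcpt : ∀ m ∈ M, IsCompactElt m := fun m hm => mub_compact h1 ha hb hm
  have hMfin : M.Finite := by
    letI := lawsonTopology P
    haveI : CompactSpace P := h2
    have hK : IsCompact (Set.Ici a ∩ Set.Ici b) :=
      ((lawson_isClosed_Ici a).inter (lawson_isClosed_Ici b)).isCompact
    have hopen : ∀ m : M, IsOpen (Set.Ici (m : P)) := fun m =>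
      TopologicalSpace.GenerateOpen.basic _ (Or.inl (scottOpen_Ici (hMcpt m m.2)))
    have hcov : Set.Ici a ∩ Set.Ici b ⊆ ⋃ m : M, Set.Ici (m : P) := by
      rw [hdecomp]
      exact Set.iUnion₂_subset fun m hm =>
        Set.subset_iUnion_of_subset ⟨m, hm⟩ (Set.Subset.refl _)
    obtain ⟨t, ht⟩ := hK.elim_finite_subcover _ hopen hcov
    have hsub : M ⊆ Subtype.val '' (t : Set M) := by
      intro m hm
      have hmK : m ∈ Set.Ici a ∩ Set.Ici b :=
        ⟨(hm : IsMubOf a b m).1, (hm : IsMubOf a b m).2.1⟩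
      obtain ⟨m', hm't, hmm'⟩ := Set.mem_iUnion₂.mp (ht hmK)
      have he : (m' : P) = m := mub_unique h1.2 m'.2 hm hmm' le_rfl
      exact ⟨m', hm't, he⟩
    exact Set.Finite.subset ((t.finite_toSet).image _) hsub
  refine ⟨hMfin.toFinset.image Set.Ici, ?_, ?_, ?_⟩
  · intro W hW
    simp only [Finset.mem_image, Set.Finite.mem_toFinset] at hW
    obtain ⟨m, hm, rfl⟩ := hW
    exact coprimeCO_Ici (hMcpt m hm)
  · intro W hW W' hW' hne
    simp only [Finset.mem_image, Set.Finite.mem_toFinset] at hW hW'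
    obtain ⟨m, hm, rfl⟩ := hW
    obtain ⟨m', hm', rfl⟩ := hW'
    ext y
    simp only [Set.mem_inter_iff, Set.mem_Ici, Set.mem_empty_iff_false, iff_false]
    rintro ⟨hmy, hm'y⟩
    exact hne (congrArg Set.Ici (mub_unique h1.2 hm hm' hmy hm'y))
  · rw [hdecomp]
    ext x
    simp only [Set.mem_iUnion, Set.mem_sUnion, Finset.coe_image, Set.mem_image,
      Finset.mem_coe, Set.Finite.mem_toFinset]
    constructor
    · rintro ⟨m, hm, hx⟩; exact ⟨Set.Ici m, ⟨m, hm, rfl⟩, hx⟩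
    · rintro ⟨V, ⟨m, hm, rfl⟩, hx⟩; exact ⟨m, hm, hx⟩

end Helpers

/-- For a Lawson compact algebraic L-domain `P`, the bounded distributive
lattice `CO P` is an FDD-lattice: every compact-open set is a finite union of nonempty
co-prime compact-open sets, and the intersection of two nonempty co-prime compact-open
sets is a finite union of pairwise disjoint nonempty co-prime compact-open sets. -/
theorem stmt2 (P : Type*) [PartialOrder P]
    (h1 : IsAlgebraicLDomain P) (h2 : LawsonCompact P) :
    ((∅ : Set P) ∈ CO P ∧ (Set.univ : Set P) ∈ CO P ∧
      ∀ U ∈ CO P, ∀ V ∈ CO P, U ∪ V ∈ CO P ∧ U ∩ V ∈ CO P) ∧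
    (∀ U ∈ CO P, ∃ F : Finset (Set P),
      (∀ V ∈ F, CoprimeCO P V) ∧ U = ⋃₀ (F : Set (Set P))) ∧
    (∀ U V : Set P, CoprimeCO P U → CoprimeCO P V →
      ∃ F : Finset (Set P), (∀ W ∈ F, CoprimeCO P W) ∧
        (∀ W ∈ F, ∀ W' ∈ F, W ≠ W' → W ∩ W' = ∅) ∧
        U ∩ V = ⋃₀ (F : Set (Set P))) := by
  classical
  obtain ⟨hAD, hPI⟩ := h1
  refine ⟨⟨CO_empty, CO_univ h2, fun U hU V hV =>
    ⟨CO_union hU hV, CO_inter hAD h2 hU hV⟩⟩, ?_, ?_⟩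
  · intro U hU
    obtain ⟨M, hMfin, hMk, hUeq⟩ := CO_eq_biUnion_Ici hAD hU
    refine ⟨hMfin.toFinset.image Set.Ici, ?_, ?_⟩
    · intro V hV
      simp only [Finset.mem_image, Set.Finite.mem_toFinset] at hV
      obtain ⟨k, hk, rfl⟩ := hV
      exact coprimeCO_Ici (hMk k hk).1
    · rw [hUeq]
      ext x
      simp only [Set.mem_iUnion, Set.mem_sUnion, Finset.coe_image, Set.mem_image,
        Finset.mem_coe, Set.Finite.mem_toFinset]
      constructor
      · rintro ⟨k, hk, hx⟩; exact ⟨Set.Ici k, ⟨k, hk, rfl⟩, hx⟩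
      · rintro ⟨V, ⟨k, hk, rfl⟩, hx⟩; exact ⟨k, hk, hx⟩
  · intro U V hU hV
    obtain ⟨a, ha, rfl⟩ := coprime_eq_Ici hAD hU
    obtain ⟨b, hb, rfl⟩ := coprime_eq_Ici hAD hV
    exact inter_Ici_decomp ⟨hAD, hPI⟩ h2 ha hb
end

section
/- Let L be an FDD-lattice and p a point of L. Then p is the supremum in pt(L) of the directed set H_p = {γ_a : a ∈ Cp(L), γ_a ≤ p}; equivalently, for every x ∈ L, p(x) = 1 if and only if γ_a(x) = 1 for some a ∈ Cp(L) with γ_a ≤ p. -/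

lemma gammaPt_isPoint {L : Type*} [Lattice L] [BoundedOrder L] {a : L}
    (ha : CoprimeElt a) : IsPoint (gammaPt a) := by
  unfold gammaPt
  refine ⟨?_, ?_, ?_, ?_⟩
  · simp only [decide_eq_false_iff_not, le_bot_iff]; exact ha.1
  · simp
  · intro x y
    rcases Classical.em (a ≤ x) with hx | hx <;> rcases Classical.em (a ≤ y) with hy | hy <;>
      simp [hx, hy, le_inf_iff]
  · intro x y
    rcases Classical.em (a ≤ x) with hx | hx <;> rcases Classical.em (a ≤ y) with hy | hy
    · simp [hx, hy, hx.trans le_sup_left]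
    · simp [hx, hy, hx.trans le_sup_left]
    · simp [hx, hy, hy.trans le_sup_right]
    · have : ¬ a ≤ x ⊔ y := fun h => (ha.2 x y h).elim hx hy
      simp [hx, hy, this]

lemma point_mono {L : Type*} [Lattice L] [BoundedOrder L] {p : L → Bool}
    (hp : IsPoint p) {a b : L} (hab : a ≤ b) (ha : p a = true) : p b = true := by
  have : p (a ⊓ b) = (p a && p b) := hp.2.2.1 a b
  rw [inf_eq_left.mpr hab, ha] at this
  simpa using this.symm

/-- For an FDD-lattice `L` and a point `p`, `p` is the supremum in `Pt L`
of the directed set `H_p = {γ_a : a ∈ Cp(L), γ_a ≤ p}`; equivalently, for every `x`,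
`p x = 1` iff `γ_a x = 1` for some nonzero co-prime `a` with `γ_a ≤ p`. -/
theorem stmt6 {L : Type*} [DistribLattice L] [BoundedOrder L] (hL : IsFDD L)
    (p : Pt L) :
    IsLUB {q : Pt L | ∃ a : L, CoprimeElt a ∧ q.1 = gammaPt a ∧ q ≤ p} p ∧
    (∀ x : L, p.1 x = true ↔
      ∃ a : L, CoprimeElt a ∧ gammaPt a ≤ p.1 ∧ gammaPt a x = true) := by
  have key : ∀ x : L, p.1 x = true ↔
      ∃ a : L, CoprimeElt a ∧ gammaPt a ≤ p.1 ∧ gammaPt a x = true := by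
    intro x
    constructor
    · intro hx
      obtain ⟨F, hF, hsup⟩ := hL.1 x
      haveI : DecidableEq L := Classical.decEq L
      -- find a ∈ F with p a = true
      have : ∃ a ∈ F, p.1 a = true := by
        by_contra h
        push_neg at h
        have : ∀ F : Finset L, (∀ a ∈ F, p.1 a ≠ true) → p.1 (F.sup id) = false := by
          intro G
          induction G using Finset.induction_on with
          | empty => intro _; simpa using p.2.1
          | insert c G hni ih =>
            intro hG
            rw [Finset.sup_insert, p.2.2.2.2]
            have h1 : p.1 c = false := by
              have := hG c (Finset.mem_insert_self c G)
              simpa using this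
            have h2 := ih (fun a haG => hG a (Finset.mem_insert_of_mem haG))
            simp [h1, h2]
        have := this F (fun a ha => by simp [h a ha])
        rw [← hsup] at this
        rw [hx] at this; exact absurd this (by simp)
      obtain ⟨a, haF, hpa⟩ := this
      refine ⟨a, hF a haF, ?_, ?_⟩
      · intro y
        by_cases hay : a ≤ y
        · have : p.1 y = true := point_mono p.2 hay hpa
          simp [gammaPt, hay, this]
        · simp [gammaPt, hay]
      · have : a ≤ x := hsup ▸ Finset.le_sup (f := id) haF
        simp [gammaPt, this]
    · rintro ⟨a, _, hle, hax⟩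
      have := hle x
      rw [hax] at this
      cases h : p.1 x
      · rw [h] at this; exact absurd this (by simp)
      · rfl
  refine ⟨⟨?_, ?_⟩, key⟩
  · rintro q ⟨a, _, _, hqp⟩
    exact hqp
  · intro u hu
    intro x
    show p.1 x ≤ u.1 x
    by_cases hx : p.1 x = true
    · obtain ⟨a, ha, hle, hax⟩ := (key x).mp hx
      have hq : (⟨gammaPt a, gammaPt_isPoint ha⟩ : Pt L) ∈
          {q : Pt L | ∃ a : L, CoprimeElt a ∧ q.1 = gammaPt a ∧ q ≤ p} :=
        ⟨a, ha, rfl, hle⟩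
      have : gammaPt a x ≤ u.1 x := hu hq x
      rw [hx]
      calc (true : Bool) = gammaPt a x := hax.symm
        _ ≤ u.1 x := this
    · have : p.1 x = false := by simpa using hx
      rw [this]; exact Bool.false_le _
end

section
/- Let L be an FDD-lattice and x ∈ L, and write x = ⋁F for a finite subset F ⊆ Cp(L). Then the set η_L(x) = {p ∈ pt(L) : p(x) = 1} equals the upper set ↑{γ_a : a ∈ F} in pt(L), and η_L(x) is a compact-open subset of pt(L) with its Scott topology. -/
section Aux

lemma bool_le_of_imp {b c : Bool} (h : b = true → c = true) : b ≤ c := by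
  cases b
  · exact Bool.false_le c
  · simp [h rfl]

lemma bool_true_of_le {b c : Bool} (h : b ≤ c) (hb : b = true) : c = true := by
  cases c
  · subst hb; exact absurd h (by decide)
  · rfl

variable {L : Type*} [Lattice L] [BoundedOrder L]

lemma pt_mono (p : Pt L) {a y : L} (h : a ≤ y) (ha : p.1 a = true) : p.1 y = true := by
  have h2 := p.2.2.2.1 a y
  rw [inf_eq_left.mpr h, ha] at h2
  exact (Bool.and_eq_true _ _).mp h2.symm |>.2

lemma gamma_true {a y : L} : gammaPt a y = true ↔ a ≤ y := by
  simp [gammaPt]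

lemma pt_sup_true (p : Pt L) (F : Finset L) :
    p.1 (F.sup id) = true ↔ ∃ a ∈ F, p.1 a = true := by
  classical
  induction F using Finset.induction_on with
  | empty => simp [p.2.1]
  | @insert a s _ ih =>
    rw [Finset.sup_insert, p.2.2.2.2]
    simp [ih, Bool.or_eq_true]

lemma gamma_point {a : L} (ha : CoprimeElt a) : IsPoint (gammaPt a) := by
  refine ⟨?_, ?_, ?_, ?_⟩
  · rw [Bool.eq_false_iff]
    intro h
    exact ha.1 (le_bot_iff.mp (gamma_true.mp h))
  · exact gamma_true.mpr le_top
  · intro x y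
    by_cases hx : a ≤ x <;> by_cases hy : a ≤ y <;>
      simp [gammaPt, le_inf_iff, hx, hy]
  · intro x y
    by_cases hx : a ≤ x <;> by_cases hy : a ≤ y
    · simp [gammaPt, le_sup_of_le_left hx, hx]
    · simp [gammaPt, le_sup_of_le_left hx, hx]
    · simp [gammaPt, le_sup_of_le_right hy, hx, hy]
    · have : ¬ a ≤ x ⊔ y := fun h => (ha.2 x y h).elim hx hy
      simp [gammaPt, this, hx, hy]

lemma pt_lub_true (D : Set (Pt L)) (hne : D.Nonempty) (hdir : DirectedOn (· ≤ ·) D)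
    {s : Pt L} (hs : IsLUB D s) {x : L} (hx : s.1 x = true) :
    ∃ p ∈ D, p.1 x = true := by
  classical
  set q : L → Bool := fun y => decide (∃ p ∈ D, p.1 y = true) with hq
  have hq_true : ∀ y, q y = true ↔ ∃ p ∈ D, p.1 y = true := by
    intro y; simp [hq]
  have hqpt : IsPoint q := by
    refine ⟨?_, ?_, ?_, ?_⟩
    · rw [Bool.eq_false_iff]
      intro h
      obtain ⟨p, _, hp⟩ := (hq_true ⊥).mp h
      rw [p.2.1] at hp; exact absurd hp (by decide)
    · obtain ⟨p, hp⟩ := hne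
      exact (hq_true ⊤).mpr ⟨p, hp, p.2.2.1⟩
    · intro y z
      rw [Bool.eq_iff_iff, hq_true, Bool.and_eq_true, hq_true, hq_true]
      constructor
      · rintro ⟨p, hpD, hp⟩
        have h2 := p.2.2.2.1 y z
        rw [hp] at h2
        obtain ⟨h1, h2⟩ := (Bool.and_eq_true _ _).mp h2.symm
        exact ⟨⟨p, hpD, h1⟩, ⟨p, hpD, h2⟩⟩
      · rintro ⟨⟨p1, hp1D, hp1⟩, ⟨p2, hp2D, hp2⟩⟩
        obtain ⟨p, hpD, h1, h2⟩ := hdir p1 hp1D p2 hp2D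
        have hy : p.1 y = true := bool_true_of_le (h1 y) hp1
        have hz : p.1 z = true := bool_true_of_le (h2 z) hp2
        refine ⟨p, hpD, ?_⟩
        rw [p.2.2.2.1, hy, hz]; rfl
    · intro y z
      rw [Bool.eq_iff_iff, hq_true, Bool.or_eq_true, hq_true, hq_true]
      constructor
      · rintro ⟨p, hpD, hp⟩
        have h2 := p.2.2.2.2 y z
        rw [hp] at h2
        rcases (Bool.or_eq_true _ _).mp h2.symm with h | h
        · exact Or.inl ⟨p, hpD, h⟩
        · exact Or.inr ⟨p, hpD, h⟩
      · rintro (⟨p, hpD, hp⟩ | ⟨p, hpD, hp⟩) <;>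
        · refine ⟨p, hpD, ?_⟩
          rw [p.2.2.2.2, hp]
          simp
  have hub : (⟨q, hqpt⟩ : Pt L) ∈ upperBounds D := by
    intro p hpD
    show p.1 ≤ q
    intro y
    exact bool_le_of_imp (fun h => (hq_true y).mpr ⟨p, hpD, h⟩)
  have hsq : s.1 ≤ q := hs.2 hub
  exact (hq_true x).mp (bool_true_of_le (hsq x) hx)

end Aux

/-- For an FDD-lattice `L` and `x = ⋁F` with `F` a finite set of nonzero
co-primes, the set `η_L(x) = {p ∈ Pt L : p x = 1}` equals the upper set
`↑{γ_a : a ∈ F}` in `Pt L`, and `η_L(x)` is compact-open in the Scott topology. -/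
theorem stmt12 {L : Type*} [DistribLattice L] [BoundedOrder L] (hL : IsFDD L)
    (x : L) (F : Finset L) (hF : ∀ a ∈ F, CoprimeElt a) (hx : x = F.sup id) :
    {p : Pt L | p.1 x = true} = {p : Pt L | ∃ a ∈ F, gammaPt a ≤ p.1} ∧
    {p : Pt L | p.1 x = true} ∈ CO (Pt L) := by
  classical
  have hax : ∀ a ∈ F, a ≤ x := fun a ha => hx ▸ Finset.le_sup (f := id) ha
  have heq : {p : Pt L | p.1 x = true} = {p : Pt L | ∃ a ∈ F, gammaPt a ≤ p.1} := by
    ext p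
    simp only [Set.mem_setOf_eq]
    constructor
    · intro hp
      rw [hx] at hp
      obtain ⟨a, haF, hpa⟩ := (pt_sup_true p F).mp hp
      exact ⟨a, haF, fun y => bool_le_of_imp (fun h => pt_mono p (gamma_true.mp h) hpa)⟩
    · rintro ⟨a, haF, hle⟩
      exact bool_true_of_le (hle x) (gamma_true.mpr (hax a haF))
  refine ⟨heq, ?_, ?_⟩
  · -- Scott open
    constructor
    · intro p q hpq hp
      exact bool_true_of_le (hpq x) hp
    · intro D hne hdir s hlub hs
      obtain ⟨p, hpD, hp⟩ := pt_lub_true D hne hdir hlub hs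
      exact ⟨p, hpD, hp⟩
  · -- Scott compact
    intro C hCopen hcov
    have hpick : ∀ a : {a // a ∈ F},
        ∃ V ∈ C, (⟨gammaPt a.1, gamma_point (hF a.1 a.2)⟩ : Pt L) ∈ V := by
      intro a
      have hmem : (⟨gammaPt a.1, gamma_point (hF a.1 a.2)⟩ : Pt L)
          ∈ {p : Pt L | p.1 x = true} := gamma_true.mpr (hax a.1 a.2)
      obtain ⟨V, hVC, hV⟩ := hcov hmem
      exact ⟨V, hVC, hV⟩
    choose V hVC hVmem using hpick
    refine ⟨F.attach.image V, ?_, ?_⟩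
    · intro U hU
      obtain ⟨a, _, rfl⟩ := Finset.mem_image.mp (Finset.mem_coe.mp hU)
      exact hVC a
    · intro p hp
      obtain ⟨a, haF, hle⟩ := heq ▸ hp
      refine Set.mem_sUnion.mpr ⟨V ⟨a, haF⟩, ?_, ?_⟩
      · exact Finset.mem_coe.mpr
          (Finset.mem_image.mpr ⟨⟨a, haF⟩, Finset.mem_attach _ _, rfl⟩)
      · exact (hCopen _ (hVC ⟨a, haF⟩)).1
          (show (⟨gammaPt a, gamma_point (hF a haF)⟩ : Pt L) ≤ p from hle)
          (hVmem ⟨a, haF⟩)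
end

section
/- Every Lawson compact algebraic L-domain M is order-isomorphic to pt(CO(M)), the poset of points of the lattice of compact-open subsets of M, via the map θ_M sending x ∈ M to the directed supremum of {γ_{↑k} : k ∈ ↓x ∩ K(M)}, where γ_{↑k} : CO(M) → {0,1} maps U to 1 iff ↑k ⊆ U. -/
/-- A point of the bounded lattice `CO P` of compact-open sets, encoded as a
`Bool`-valued map on `Set P` preserving `∅` (the bottom), `univ` (the top), and binary
meets (intersections) and joins (unions) of compact-open sets. -/
def IsPointOnCO (P : Type*) [PartialOrder P] (p : Set P → Bool) : Prop :=
  p ∅ = false ∧ p Set.univ = true ∧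
  ∀ U ∈ CO P, ∀ V ∈ CO P,
    p (U ∩ V) = (p U && p V) ∧ p (U ∪ V) = (p U || p V)

/-- `θ_M x`: the (pointwise, directed) supremum of `{γ_{↑k} : k ∈ ↓x ∩ K(M)}`, where
`γ_{↑k} U = 1` iff `↑k ⊆ U`. -/
noncomputable def thetaMap {P : Type*} [PartialOrder P] (x : P) : Set P → Bool :=
  fun U => @decide (∃ k : P, IsCompactElt k ∧ k ≤ x ∧ Set.Ici k ⊆ U)
    (Classical.propDecidable _)


section AuxProofs

variable {M : Type*} [PartialOrder M]

lemma aux_theta_true {x : M} {U : Set M} :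
    thetaMap x U = true ↔ ∃ k : M, IsCompactElt k ∧ k ≤ x ∧ Set.Ici k ⊆ U := by
  simp [thetaMap]

lemma aux_ici_scottOpen {k : M} (hk : IsCompactElt k) : ScottOpen (Set.Ici k) := by
  refine ⟨fun a b hab ha => le_trans ha hab, ?_⟩
  intro D hD hdir s hs hsk
  obtain ⟨d, hd, hkd⟩ := hk D hD hdir s hs hsk
  exact ⟨d, hd, hkd⟩

lemma aux_ici_CO {k : M} (hk : IsCompactElt k) : Set.Ici k ∈ CO M := by
  refine ⟨aux_ici_scottOpen hk, ?_⟩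
  intro C hC hcov
  obtain ⟨V, hVC, hkV⟩ := hcov Set.self_mem_Ici
  refine ⟨{V}, by simpa using hVC, ?_⟩
  intro a ha
  simp only [Finset.coe_singleton, Set.sUnion_singleton]
  exact (hC V hVC).1 ha hkV

lemma aux_empty_CO : (∅ : Set M) ∈ CO M := by
  refine ⟨⟨fun a b _ h => h.elim, fun D _ _ s _ hs => absurd hs (Set.notMem_empty s)⟩, ?_⟩
  intro C _ _
  exact ⟨∅, by simp, by simp⟩

lemma aux_union_CO {U V : Set M} (hU : U ∈ CO M) (hV : V ∈ CO M) : U ∪ V ∈ CO M := by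
  obtain ⟨⟨hUu, hUo⟩, hUc⟩ := hU
  obtain ⟨⟨hVu, hVo⟩, hVc⟩ := hV
  refine ⟨⟨hUu.union hVu, ?_⟩, ?_⟩
  · intro D hD hdir s hs hsm
    rcases hsm with h | h
    · obtain ⟨d, hd, hdU⟩ := hUo D hD hdir s hs h
      exact ⟨d, hd, Or.inl hdU⟩
    · obtain ⟨d, hd, hdV⟩ := hVo D hD hdir s hs h
      exact ⟨d, hd, Or.inr hdV⟩
  · intro C hC hcov
    obtain ⟨F1, hF1, hcov1⟩ := hUc C hC (Set.subset_union_left.trans hcov)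
    obtain ⟨F2, hF2, hcov2⟩ := hVc C hC (Set.subset_union_right.trans hcov)
    classical
    refine ⟨F1 ∪ F2, ?_, ?_⟩
    · rw [Finset.coe_union]
      exact Set.union_subset hF1 hF2
    · rw [Finset.coe_union, Set.sUnion_union]
      exact Set.union_subset (hcov1.trans Set.subset_union_left)
        (hcov2.trans Set.subset_union_right)

lemma aux_sUnion_CO (F : Finset (Set M)) (h : ∀ V ∈ F, V ∈ CO M) :
    ⋃₀ (F : Set (Set M)) ∈ CO M := by
  classical
  induction F using Finset.induction_on with
  | empty => simpa using aux_empty_CO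
  | insert a s hnotmem ih =>
    simp only [Finset.coe_insert, Set.sUnion_insert]
    exact aux_union_CO (h a (Finset.mem_insert_self a s))
      (ih fun V hV => h V (Finset.mem_insert_of_mem hV))

lemma aux_point_mono {p : Set M → Bool} (hp : IsPointOnCO M p) {U V : Set M}
    (hU : U ∈ CO M) (hV : V ∈ CO M) (hUV : U ⊆ V) (hpU : p U = true) : p V = true := by
  have h := (hp.2.2 U hU V hV).2
  rw [Set.union_eq_self_of_subset_left hUV] at h
  rw [h, hpU, Bool.true_or]

lemma aux_point_sUnion {p : Set M → Bool} (hp : IsPointOnCO M p) (F : Finset (Set M))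
    (h : ∀ V ∈ F, V ∈ CO M) (hT : p (⋃₀ (F : Set (Set M))) = true) :
    ∃ V ∈ F, p V = true := by
  classical
  induction F using Finset.induction_on with
  | empty =>
    simp only [Finset.coe_empty, Set.sUnion_empty] at hT
    rw [hp.1] at hT
    exact absurd hT (by simp)
  | insert a s hnotmem ih =>
    have ha : a ∈ CO M := h a (Finset.mem_insert_self a s)
    have hs : ∀ V ∈ s, V ∈ CO M := fun V hV => h V (Finset.mem_insert_of_mem hV)
    simp only [Finset.coe_insert, Set.sUnion_insert] at hT
    rw [(hp.2.2 a ha _ (aux_sUnion_CO s hs)).2] at hT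
    rcases Bool.or_eq_true_iff.mp hT with h1 | h1
    · exact ⟨a, Finset.mem_insert_self a s, h1⟩
    · obtain ⟨V, hV, hpV⟩ := ih hs h1
      exact ⟨V, Finset.mem_insert_of_mem hV, hpV⟩

lemma aux_lawson_scottOpen_isOpen {U : Set M} (hU : ScottOpen U) :
    @IsOpen M (lawsonTopology M) U :=
  TopologicalSpace.GenerateOpen.basic U (Or.inl hU)

lemma aux_ici_lawsonClosed (x : M) : @IsClosed M (lawsonTopology M) (Set.Ici x) := by
  letI := lawsonTopology M
  rw [← isOpen_compl_iff]
  exact TopologicalSpace.GenerateOpen.basic _ (Or.inr ⟨x, rfl⟩)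

lemma aux_scottCompact_of_lawsonClosed (h2 : LawsonCompact M) {A : Set M}
    (hA : @IsClosed M (lawsonTopology M) A) : ScottCompactSet A := by
  classical
  letI := lawsonTopology M
  haveI : CompactSpace M := h2
  intro C hC hcov
  have hcomp : IsCompact A := hA.isCompact
  have hcov' : A ⊆ ⋃ (V : C), (V : Set M) := by
    rw [← Set.sUnion_eq_iUnion]; exact hcov
  obtain ⟨t, ht⟩ := hcomp.elim_finite_subcover (fun V : C => (V : Set M))
    (fun V => aux_lawson_scottOpen_isOpen (hC V V.2)) hcov'
  refine ⟨t.image Subtype.val, ?_, ?_⟩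
  · intro V hV
    simp only [Finset.coe_image, Set.mem_image] at hV
    obtain ⟨W, _, rfl⟩ := hV
    exact W.2
  · intro a ha
    obtain ⟨W, hWmem, haW⟩ := Set.mem_iUnion₂.mp (ht ha)
    refine ⟨W.val, ?_, haW⟩
    simp only [Finset.coe_image, Set.mem_image, Finset.mem_coe]
    exact ⟨W, hWmem, rfl⟩

lemma aux_univ_CO (h2 : LawsonCompact M) : (Set.univ : Set M) ∈ CO M := by
  refine ⟨⟨fun _ _ _ _ => trivial, ?_⟩, ?_⟩
  · intro D hD _ s _ _
    obtain ⟨d, hd⟩ := hD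
    exact ⟨d, hd, trivial⟩
  · exact aux_scottCompact_of_lawsonClosed h2 (by letI := lawsonTopology M; exact isClosed_univ)

lemma aux_inter_ici_CO (h2 : LawsonCompact M) {k₁ k₂ : M}
    (hk₁ : IsCompactElt k₁) (hk₂ : IsCompactElt k₂) :
    Set.Ici k₁ ∩ Set.Ici k₂ ∈ CO M := by
  constructor
  · constructor
    · rintro a b hab ⟨ha1, ha2⟩
      exact ⟨le_trans ha1 hab, le_trans ha2 hab⟩
    · rintro D hD hdir s hs ⟨hs1, hs2⟩
      obtain ⟨d₁, hd₁, hkd₁⟩ := hk₁ D hD hdir s hs hs1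
      obtain ⟨d₂, hd₂, hkd₂⟩ := hk₂ D hD hdir s hs hs2
      obtain ⟨d, hd, h1d, h2d⟩ := hdir d₁ hd₁ d₂ hd₂
      exact ⟨d, hd, le_trans hkd₁ h1d, le_trans hkd₂ h2d⟩
  · exact aux_scottCompact_of_lawsonClosed h2
      (by letI := lawsonTopology M
          exact (aux_ici_lawsonClosed k₁).inter (aux_ici_lawsonClosed k₂))

lemma aux_CO_cover (h1 : IsAlgebraicDomain M) {U : Set M} (hU : U ∈ CO M) :
    ∃ F : Finset (Set M), (∀ V ∈ F, ∃ k : M, IsCompactElt k ∧ k ∈ U ∧ V = Set.Ici k) ∧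
      U ⊆ ⋃₀ (F : Set (Set M)) := by
  set C : Set (Set M) := {V | ∃ k : M, IsCompactElt k ∧ k ∈ U ∧ V = Set.Ici k} with hCdef
  have hCopen : ∀ V ∈ C, ScottOpen V := by
    rintro V ⟨k, hk, _, rfl⟩
    exact aux_ici_scottOpen hk
  have hcov : U ⊆ ⋃₀ C := by
    intro x hx
    obtain ⟨hne, hdir, hlub⟩ := h1.2 x
    obtain ⟨k, hkmem, hkU⟩ := hU.1.2 _ hne hdir x hlub hx
    exact ⟨Set.Ici k, ⟨k, hkmem.2, hkU, rfl⟩, hkmem.1⟩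
  obtain ⟨F, hFC, hcovF⟩ := hU.2 C hCopen hcov
  exact ⟨F, fun V hV => hFC hV, hcovF⟩

lemma aux_pointA (h1 : IsAlgebraicDomain M) {p : Set M → Bool} (hp : IsPointOnCO M p)
    {U : Set M} (hU : U ∈ CO M) (hpU : p U = true) :
    ∃ k : M, IsCompactElt k ∧ Set.Ici k ⊆ U ∧ p (Set.Ici k) = true := by
  obtain ⟨F, hF, hUF⟩ := aux_CO_cover h1 hU
  have hFCO : ∀ V ∈ F, V ∈ CO M := by
    intro V hV
    obtain ⟨k, hk, _, rfl⟩ := hF V hV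
    exact aux_ici_CO hk
  have hpF : p (⋃₀ (F : Set (Set M))) = true :=
    aux_point_mono hp hU (aux_sUnion_CO F hFCO) hUF hpU
  obtain ⟨V, hVF, hpV⟩ := aux_point_sUnion hp F hFCO hpF
  obtain ⟨k, hk, hkU, rfl⟩ := hF V hVF
  exact ⟨k, hk, fun a ha => hU.1.1 ha hkU, hpV⟩

end AuxProofs

/-- Every Lawson compact algebraic L-domain `M` is order-isomorphic to
`pt(CO M)` via `θ_M`: each `θ_M x` is a point of `CO M`, `θ_M` is an order embedding
(for the pointwise order of points, compared on `CO M`), and every point of `CO M`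
agrees on `CO M` with some `θ_M x`. -/
theorem stmt15 {M : Type*} [PartialOrder M]
    (h1 : IsAlgebraicLDomain M) (h2 : LawsonCompact M) :
    (∀ x : M, IsPointOnCO M (thetaMap x)) ∧
    (∀ x y : M, x ≤ y ↔ ∀ U ∈ CO M, thetaMap x U ≤ thetaMap y U) ∧
    (∀ p : Set M → Bool, IsPointOnCO M p → ∃ x : M, ∀ U ∈ CO M, p U = thetaMap x U) := by
  obtain ⟨halg, _hL⟩ := h1
  refine ⟨?_, ?_, ?_⟩
  · -- Part 1: each θ x is a point on CO M
    intro x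
    refine ⟨?_, ?_, ?_⟩
    · rw [← Bool.not_eq_true, aux_theta_true]
      rintro ⟨k, _, _, hsub⟩
      exact hsub Set.self_mem_Ici
    · rw [aux_theta_true]
      obtain ⟨k, hkx, hkc⟩ := (halg.2 x).1
      exact ⟨k, hkc, hkx, Set.subset_univ _⟩
    · intro U hU V hV
      constructor
      · refine Bool.eq_iff_iff.mpr ?_
        rw [Bool.and_eq_true, aux_theta_true, aux_theta_true, aux_theta_true]
        constructor
        · rintro ⟨k, hk, hkx, hsub⟩
          exact ⟨⟨k, hk, hkx, fun a ha => (hsub ha).1⟩, ⟨k, hk, hkx, fun a ha => (hsub ha).2⟩⟩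
        · rintro ⟨⟨k₁, hk₁, hk₁x, hsub₁⟩, ⟨k₂, hk₂, hk₂x, hsub₂⟩⟩
          obtain ⟨k, hkmem, h1k, h2k⟩ := (halg.2 x).2.1 k₁ ⟨hk₁x, hk₁⟩ k₂ ⟨hk₂x, hk₂⟩
          exact ⟨k, hkmem.2, hkmem.1,
            fun a ha => ⟨hsub₁ (le_trans h1k ha), hsub₂ (le_trans h2k ha)⟩⟩
      · refine Bool.eq_iff_iff.mpr ?_
        rw [Bool.or_eq_true, aux_theta_true, aux_theta_true, aux_theta_true]
        constructor
        · rintro ⟨k, hk, hkx, hsub⟩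
          rcases hsub Set.self_mem_Ici with hmem | hmem
          · exact Or.inl ⟨k, hk, hkx, fun a ha => hU.1.1 ha hmem⟩
          · exact Or.inr ⟨k, hk, hkx, fun a ha => hV.1.1 ha hmem⟩
        · rintro (⟨k, hk, hkx, hsub⟩ | ⟨k, hk, hkx, hsub⟩)
          · exact ⟨k, hk, hkx, fun a ha => Or.inl (hsub ha)⟩
          · exact ⟨k, hk, hkx, fun a ha => Or.inr (hsub ha)⟩
  · -- Part 2: order embedding
    intro x y
    constructor
    · intro hxy U _
      cases h : thetaMap x U with
      | false => exact Bool.false_le _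
      | true =>
        rw [aux_theta_true] at h
        obtain ⟨k, hk, hkx, hsub⟩ := h
        rw [aux_theta_true.mpr ⟨k, hk, le_trans hkx hxy, hsub⟩]
    · intro h
      obtain ⟨hne, hdir, hlub⟩ := halg.2 x
      refine hlub.2 ?_
      rintro k ⟨hkx, hkc⟩
      have hx : thetaMap x (Set.Ici k) = true :=
        aux_theta_true.mpr ⟨k, hkc, hkx, subset_rfl⟩
      have hy := h _ (aux_ici_CO hkc)
      rw [hx] at hy
      have hyt : thetaMap y (Set.Ici k) = true := by
        cases hth : thetaMap y (Set.Ici k)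
        · rw [hth] at hy; exact absurd hy (by simp)
        · rfl
      rw [aux_theta_true] at hyt
      obtain ⟨k', hk', hk'y, hsub⟩ := hyt
      exact le_trans (hsub Set.self_mem_Ici) hk'y
  · -- Part 3: surjectivity onto points
    intro p hp
    set D : Set M := {k | IsCompactElt k ∧ p (Set.Ici k) = true} with hDdef
    have hDne : D.Nonempty := by
      obtain ⟨k, hk, _, hpk⟩ := aux_pointA halg hp (aux_univ_CO h2) hp.2.1
      exact ⟨k, hk, hpk⟩
    have hDdir : DirectedOn (· ≤ ·) D := by
      rintro k₁ ⟨hk₁, hp₁⟩ k₂ ⟨hk₂, hp₂⟩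
      have hW : Set.Ici k₁ ∩ Set.Ici k₂ ∈ CO M := aux_inter_ici_CO h2 hk₁ hk₂
      have hpW : p (Set.Ici k₁ ∩ Set.Ici k₂) = true := by
        rw [(hp.2.2 _ (aux_ici_CO hk₁) _ (aux_ici_CO hk₂)).1, hp₁, hp₂]
        rfl
      obtain ⟨k, hk, hsub, hpk⟩ := aux_pointA halg hp hW hpW
      have hmem := hsub Set.self_mem_Ici
      exact ⟨k, ⟨hk, hpk⟩, hmem.1, hmem.2⟩
    obtain ⟨x, hx⟩ := halg.1 D hDne hDdir
    refine ⟨x, fun U hU => ?_⟩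
    refine Bool.eq_iff_iff.mpr ?_
    rw [aux_theta_true]
    constructor
    · intro hpU
      obtain ⟨k, hk, hsub, hpk⟩ := aux_pointA halg hp hU hpU
      exact ⟨k, hk, hx.1 ⟨hk, hpk⟩, hsub⟩
    · rintro ⟨k, hk, hkx, hsub⟩
      obtain ⟨d, hdD, hkd⟩ := hk D hDne hDdir x hx hkx
      exact aux_point_mono hp (aux_ici_CO hdD.1) hU
        (fun a ha => hsub (le_trans hkd ha)) hdD.2
end
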